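/- Let A = {a_0 < a_1 < ... < a_{k-1}} ⊆ C_n. The set DN¹_0 consisting of the constant map ā_0 together with all monotone maps α with im(α) ⊆ A taking the value a_0 exactly n−1 times is a subsemiring of σ^{(n)}(A) (closed under pointwise max and composition). -/
import Mathlib


/-- The discrete neighborhood `DN¹` of a vertex `a`: the constant map `ā` together with all
monotone maps with range in `A` taking the value `a` exactly `n-1` times. -/
def DN1 (n : ℕ) (A : Set (Fin n)) (a : Fin n) : Set (Fin n → Fin n) :=
  {γ | Monotone γ ∧ Set.range γ ⊆ A ∧
    ((∀ i, γ i = a) ∨ (Finset.univ.filter fun i => γ i = a).card = n - 1)}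

lemma DN1_iff (n : ℕ) (A : Set (Fin n)) (a0 : Fin n)
    (hleast : ∀ x ∈ A, a0 ≤ x) (γ : Fin n → Fin n) :
    γ ∈ DN1 n A a0 ↔ Monotone γ ∧ Set.range γ ⊆ A ∧
      ∀ i : Fin n, (i : ℕ) + 1 < n → γ i = a0 := by
  constructor
  · rintro ⟨hm, hr, hconst | hcard⟩
    · exact ⟨hm, hr, fun i _ => hconst i⟩
    · refine ⟨hm, hr, fun i hi => ?_⟩
      by_contra hne
      have hn : 0 < n := i.pos
      set j : Fin n := ⟨n - 1, by omega⟩ with hj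
      have hij : i ≤ j := by
        rw [Fin.le_def]
        simp only [hj]
        omega
      have hinej : i ≠ j := by
        intro h
        apply_fun (Fin.val) at h
        simp only [hj] at h
        omega
      have hγi : a0 < γ i := lt_of_le_of_ne (hleast _ (hr ⟨i, rfl⟩)) (Ne.symm hne)
      have hγj : ¬ γ j = a0 := by
        have := hm hij
        intro h
        rw [h] at this
        exact absurd (le_antisymm this (le_of_lt hγi)) hne
      have hsub : ({i, j} : Finset (Fin n)) ⊆
          Finset.univ.filter (fun x => ¬ γ x = a0) := by
        intro x hx
        simp only [Finset.mem_insert, Finset.mem_singleton] at hx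
        rcases hx with rfl | rfl <;> simp [hne, hγj]
      have hcard2 : ({i, j} : Finset (Fin n)).card = 2 := Finset.card_pair hinej
      have h2le : 2 ≤ (Finset.univ.filter (fun x => ¬ γ x = a0)).card := by
        rw [← hcard2]; exact Finset.card_le_card hsub
      have htot := Finset.card_filter_add_card_filter_not
        (s := (Finset.univ : Finset (Fin n))) (p := fun x => γ x = a0)
      rw [Finset.card_univ, Fintype.card_fin] at htot
      omega
  · rintro ⟨hm, hr, h⟩
    refine ⟨hm, hr, ?_⟩
    by_cases hc : ∀ i, γ i = a0
    · exact Or.inl hc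
    · right
      push_neg at hc
      obtain ⟨j, hj⟩ := hc
      have hn : 0 < n := j.pos
      have hjv : (j : ℕ) + 1 = n := by
        by_contra hne
        exact hj (h j (by have := j.isLt; omega))
      have hneg : Finset.univ.filter (fun x => ¬ γ x = a0) = {j} := by
        ext x
        simp only [Finset.mem_filter, Finset.mem_univ, true_and, Finset.mem_singleton]
        constructor
        · intro hx
          by_contra hxj
          have hxv : (x : ℕ) + 1 < n := by
            have h1 := x.isLt
            have : (x : ℕ) ≠ (j : ℕ) := fun he => hxj (Fin.ext he)
            omega
          exact hx (h x hxv)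
        · rintro rfl; exact hj
      have htot := Finset.card_filter_add_card_filter_not
        (s := (Finset.univ : Finset (Fin n))) (p := fun x => γ x = a0)
      rw [Finset.card_univ, Fintype.card_fin, hneg, Finset.card_singleton] at htot
      omega

/-- For `a0` the least element of `A`, the set `DN¹_0` is closed under pointwise
maximum and under composition, i.e. it is a subsemiring of the simplex `σ^{(n)}(A)`. -/
theorem stmt3 (n : ℕ) (A : Set (Fin n)) (a0 : Fin n) (ha0 : a0 ∈ A)
    (hleast : ∀ x ∈ A, a0 ≤ x) :
    ∀ α ∈ DN1 n A a0, ∀ β ∈ DN1 n A a0,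
      (fun i => max (α i) (β i)) ∈ DN1 n A a0 ∧ (β ∘ α) ∈ DN1 n A a0 := by
  intro α hα β hβ
  rw [DN1_iff n A a0 hleast] at hα hβ
  obtain ⟨hmα, hrα, hα3⟩ := hα
  obtain ⟨hmβ, hrβ, hβ3⟩ := hβ
  constructor
  · rw [DN1_iff n A a0 hleast]
    refine ⟨fun x y hxy => max_le_max (hmα hxy) (hmβ hxy), ?_, fun i hi => by
      rw [hα3 i hi, hβ3 i hi]; exact max_self a0⟩
    rintro x ⟨i, rfl⟩
    show max (α i) (β i) ∈ A
    rcases le_total (α i) (β i) with h | h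
    · rw [max_eq_right h]; exact hrβ ⟨i, rfl⟩
    · rw [max_eq_left h]; exact hrα ⟨i, rfl⟩
  · rw [DN1_iff n A a0 hleast]
    refine ⟨hmβ.comp hmα, ?_, ?_⟩
    · rintro x ⟨i, rfl⟩
      exact hrβ ⟨α i, rfl⟩
    · intro i hi
      have hai : α i = a0 := hα3 i hi
      simp only [Function.comp_apply, hai]
      by_cases h : (a0 : ℕ) + 1 < n
      · exact hβ3 a0 h
      · have hv : (a0 : ℕ) = n - 1 := by have := a0.isLt; omega
        have hle : β a0 ≤ a0 := by
          rw [Fin.le_def, hv]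
          have := (β a0).isLt
          omega
        exact le_antisymm hle (hleast _ (hrβ ⟨a0, rfl⟩))
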